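/- Let γ > 0, r₀ > 0, let ψ : (0,r₀) → ℝ be continuous and φ : (0,r₀) → ℝ be absolutely continuous (in particular differentiable a.e.) such that φ(r) ≤ γ r φ'(r) + ψ(r) for a.e. r ∈ (0,r₀). Then the function r ↦ φ(r)/r^{1/γ} + (1/γ) ∫₀^r ψ(s)/s^{1+1/γ} ds is nondecreasing on (0,r₀). -/

import Mathlib

open Set MeasureTheory intervalIntegral

/-- Integration by parts when `φ` is only an indefinite integral of `φ'` and `v` is `C¹`. -/
lemma ibp_aux (a b : ℝ) (ha : 0 < a) (hab : a ≤ b)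
    (φ φ' v v' : ℝ → ℝ)
    (hv : ∀ s ∈ Icc a b, HasDerivAt v (v' s) s)
    (hv'c : ContinuousOn v' (Icc a b))
    (hφ'int : IntervalIntegrable φ' volume a b)
    (hftc : ∀ s ∈ Icc a b, φ s - φ a = ∫ t in a..s, φ' t) :
    φ b * v b - φ a * v a = ∫ s in a..b, (φ' s * v s + φ s * v' s) := by
  have hab' : uIcc a b = Icc a b := uIcc_of_le hab
  have hvc : ContinuousOn v (Icc a b) := fun s hs => (hv s hs).continuousAt.continuousWithinAt
  set c : ℝ → ℝ := fun s => ∫ t in a..s, φ' t with hc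
  have hcc : ContinuousOn c (Icc a b) := by
    have := continuousOn_primitive_interval' hφ'int (left_mem_uIcc (a := a) (b := b))
    rwa [hab'] at this
  have hφeq : ∀ s ∈ Icc a b, φ s = φ a + c s := fun s hs => by
    have := hftc s hs; linarith
  have hφc : ContinuousOn φ (Icc a b) :=
    (continuousOn_const.add hcc).congr hφeq
  have hφ'on : IntegrableOn φ' (Ioc a b) := hφ'int.1
  have hv'on : IntegrableOn v' (Ioc a b) :=
    (hv'c.integrableOn_Icc).mono_set Ioc_subset_Icc_self
  -- the Fubini step
  set μ : Measure ℝ := volume.restrict (Ioc a b) with hμdef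
  have hS : MeasurableSet {p : ℝ × ℝ | p.2 ≤ p.1} :=
    measurableSet_le measurable_snd measurable_fst
  have hprod : Integrable (fun p : ℝ × ℝ => v' p.1 * φ' p.2) (μ.prod μ) :=
    hv'on.mul_prod hφ'on
  have hind : Integrable ({p : ℝ × ℝ | p.2 ≤ p.1}.indicator
      (fun p : ℝ × ℝ => v' p.1 * φ' p.2)) (μ.prod μ) := hprod.indicator hS
  have swap :
      ∫ s, (∫ t, ({p : ℝ × ℝ | p.2 ≤ p.1}.indicator
          (fun p : ℝ × ℝ => v' p.1 * φ' p.2)) (s, t) ∂μ) ∂μ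
        = ∫ t, (∫ s, ({p : ℝ × ℝ | p.2 ≤ p.1}.indicator
          (fun p : ℝ × ℝ => v' p.1 * φ' p.2)) (s, t) ∂μ) ∂μ :=
    integral_integral_swap hind
  have hLHS : ∫ s, (∫ t, ({p : ℝ × ℝ | p.2 ≤ p.1}.indicator
      (fun p : ℝ × ℝ => v' p.1 * φ' p.2)) (s, t) ∂μ) ∂μ
      = ∫ s in Ioc a b, v' s * c s := by
    rw [hμdef]
    apply setIntegral_congr_fun measurableSet_Ioc
    intro s hs
    dsimp only
    have h1 : (fun t => ({p : ℝ × ℝ | p.2 ≤ p.1}.indicator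
        (fun p : ℝ × ℝ => v' p.1 * φ' p.2)) (s, t))
        = (Iic s).indicator (fun t => v' s * φ' t) := by
      funext t
      by_cases h : t ≤ s <;>
        simp [Set.indicator, h, Set.mem_setOf_eq, Set.mem_Iic]
    rw [h1, MeasureTheory.integral_indicator measurableSet_Iic, Measure.restrict_restrict measurableSet_Iic]
    have h2 : Iic s ∩ Ioc a b = Ioc a s := by
      ext z
      simp only [mem_inter_iff, mem_Iic, mem_Ioc]
      constructor
      · rintro ⟨h1', h2', h3'⟩; exact ⟨h2', h1'⟩
      · rintro ⟨h1', h2'⟩; exact ⟨h2', h1', le_trans h2' hs.2⟩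
    rw [h2, MeasureTheory.integral_const_mul]
    congr 1
    rw [hc]
    simp only []
    rw [intervalIntegral.integral_of_le hs.1.le]
  have hRHS : ∫ t, (∫ s, ({p : ℝ × ℝ | p.2 ≤ p.1}.indicator
      (fun p : ℝ × ℝ => v' p.1 * φ' p.2)) (s, t) ∂μ) ∂μ
      = ∫ t in Ioc a b, (v b - v t) * φ' t := by
    rw [hμdef]
    apply setIntegral_congr_fun measurableSet_Ioc
    intro t ht
    dsimp only
    have h1 : (fun s => ({p : ℝ × ℝ | p.2 ≤ p.1}.indicator
        (fun p : ℝ × ℝ => v' p.1 * φ' p.2)) (s, t))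
        = (Ici t).indicator (fun s => v' s * φ' t) := by
      funext s
      by_cases h : t ≤ s <;>
        simp [Set.indicator, h, Set.mem_setOf_eq, Set.mem_Ici]
    rw [h1, MeasureTheory.integral_indicator measurableSet_Ici, Measure.restrict_restrict measurableSet_Ici]
    have h2 : Ici t ∩ Ioc a b = Icc t b := by
      ext z
      simp only [mem_inter_iff, mem_Ici, mem_Ioc, mem_Icc]
      constructor
      · rintro ⟨h1', h2', h3'⟩; exact ⟨h1', h3'⟩
      · rintro ⟨h1', h2'⟩; exact ⟨h1', lt_of_lt_of_le ht.1 h1', h2'⟩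
    rw [h2, MeasureTheory.integral_mul_const, integral_Icc_eq_integral_Ioc]
    congr 1
    have hsub : Icc t b ⊆ Icc a b := Icc_subset_Icc ht.1.le le_rfl
    have hvt : ∫ s in t..b, v' s = v b - v t := by
      apply intervalIntegral.integral_eq_sub_of_hasDerivAt
      · intro x hx
        rw [uIcc_of_le ht.2] at hx
        exact hv x (hsub hx)
      · apply ContinuousOn.intervalIntegrable
        rw [uIcc_of_le ht.2]
        exact hv'c.mono hsub
    rw [← hvt, intervalIntegral.integral_of_le ht.2]
  have hkey : ∫ s in Ioc a b, v' s * c s = ∫ t in Ioc a b, (v b - v t) * φ' t := by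
    rw [← hLHS, ← hRHS]; exact swap
  -- now the computation
  have hcint : IntegrableOn (fun s => c s * v' s) (Ioc a b) :=
    ((hcc.mul hv'c).integrableOn_Icc).mono_set Ioc_subset_Icc_self
  have hφ'v : IntegrableOn (fun s => φ' s * v s) (Ioc a b) :=
    (hφ'int.mul_continuousOn (hab' ▸ hvc)).1
  have hφv' : IntegrableOn (fun s => φ s * v' s) (Ioc a b) :=
    ((hφc.mul hv'c).integrableOn_Icc).mono_set Ioc_subset_Icc_self
  have hvφ' : IntegrableOn (fun t => v t * φ' t) (Ioc a b) :=
    (hφ'int.continuousOn_mul (hab' ▸ hvc)).1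
  have e1 : ∫ s in a..b, (φ' s * v s + φ s * v' s)
      = (∫ s in Ioc a b, φ' s * v s) + ∫ s in Ioc a b, φ s * v' s := by
    rw [intervalIntegral.integral_of_le hab]
    exact integral_add hφ'v hφv'
  have e2 : ∫ s in Ioc a b, φ s * v' s
      = (∫ s in Ioc a b, φ a * v' s) + ∫ s in Ioc a b, c s * v' s := by
    rw [← integral_add (hv'on.const_mul (φ a)) hcint]
    apply setIntegral_congr_fun measurableSet_Ioc
    intro s hs
    dsimp only
    rw [hφeq s (Ioc_subset_Icc_self hs)]
    ring
  have e3 : ∫ s in Ioc a b, φ a * v' s = φ a * (v b - v a) := by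
    rw [MeasureTheory.integral_const_mul]
    congr 1
    rw [← intervalIntegral.integral_of_le hab]
    apply intervalIntegral.integral_eq_sub_of_hasDerivAt
    · intro x hx; rw [hab'] at hx; exact hv x hx
    · apply ContinuousOn.intervalIntegrable; rwa [hab']
  have e4 : ∫ t in Ioc a b, (v b - v t) * φ' t
      = v b * (φ b - φ a) - ∫ t in Ioc a b, v t * φ' t := by
    have : ∫ t in Ioc a b, (v b - v t) * φ' t
        = (∫ t in Ioc a b, v b * φ' t) - ∫ t in Ioc a b, v t * φ' t := by
      rw [← integral_sub (hφ'on.const_mul (v b)) hvφ']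
      apply setIntegral_congr_fun measurableSet_Ioc
      intro t ht; dsimp only; ring
    rw [this, MeasureTheory.integral_const_mul]
    congr 2
    rw [hftc b (right_mem_Icc.2 hab), intervalIntegral.integral_of_le hab]
  have e5 : ∫ s in Ioc a b, φ' s * v s = ∫ s in Ioc a b, v s * φ' s := by
    apply setIntegral_congr_fun measurableSet_Ioc
    intro s hs; dsimp only; ring
  have e6 : ∫ s in Ioc a b, c s * v' s = ∫ s in Ioc a b, v' s * c s := by
    apply setIntegral_congr_fun measurableSet_Ioc
    intro s hs; dsimp only; ring
  rw [e1, e2, e3, e6, hkey, e4, e5]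
  ring

/-- Gronwall-type lemma: if `φ` is absolutely continuous on `(0,r₀)` (encoded by the fact that
it is recovered from its a.e. derivative `φ'` by integration) and satisfies
`φ(r) ≤ γ r φ'(r) + ψ(r)` a.e., with `ψ` continuous, then
`r ↦ φ(r)/r^(1/γ) + (1/γ) ∫₀^r ψ(s)/s^(1+1/γ) ds` is nondecreasing on `(0,r₀)`. -/
theorem gronwall_type_monotone (γ r₀ : ℝ) (hγ : 0 < γ) (hr₀ : 0 < r₀)
    (ψ φ φ' : ℝ → ℝ) (hψcont : ContinuousOn ψ (Ioo 0 r₀))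
    -- absolute continuity of φ on (0, r₀):
    (hderiv : ∀ᵐ r ∂(volume.restrict (Ioo 0 r₀)), HasDerivAt φ (φ' r) r)
    (hφ'int : ∀ a b, a ∈ Ioo (0:ℝ) r₀ → b ∈ Ioo (0:ℝ) r₀ → IntervalIntegrable φ' volume a b)
    (hftc : ∀ a b, a ∈ Ioo (0:ℝ) r₀ → b ∈ Ioo (0:ℝ) r₀ →
      φ b - φ a = ∫ s in a..b, φ' s)
    -- the differential inequality, a.e. on (0, r₀):
    (hineq : ∀ᵐ r ∂(volume.restrict (Ioo 0 r₀)), φ r ≤ γ * r * φ' r + ψ r)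
    -- finiteness of the singular integral (otherwise the statement is trivial):
    (hint : IntegrableOn (fun s => ψ s / s ^ (1 + 1/γ)) (Ioo 0 r₀)) :
    MonotoneOn (fun r => φ r / r ^ (1/γ) + (1/γ) * ∫ s in Ioo (0:ℝ) r, ψ s / s ^ (1 + 1/γ))
      (Ioo 0 r₀) := by
  intro a ha b hb hab
  dsimp only
  set v : ℝ → ℝ := fun s => s ^ (-(1/γ) : ℝ) with hvdef
  set v' : ℝ → ℝ := fun s => (-(1/γ)) * s ^ ((-(1/γ)) - 1 : ℝ) with hv'def
  have hsub : Icc a b ⊆ Ioo 0 r₀ := fun s hs =>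
    ⟨lt_of_lt_of_le ha.1 hs.1, lt_of_le_of_lt hs.2 hb.2⟩
  have hpos : ∀ s ∈ Icc a b, (0:ℝ) < s := fun s hs => lt_of_lt_of_le ha.1 hs.1
  have hv : ∀ s ∈ Icc a b, HasDerivAt v (v' s) s := fun s hs =>
    Real.hasDerivAt_rpow_const (Or.inl (ne_of_gt (hpos s hs)))
  have hv'c : ContinuousOn v' (Icc a b) := by
    apply continuousOn_const.mul
    intro s hs
    exact (Real.continuousAt_rpow_const s _ (Or.inl (ne_of_gt (hpos s hs)))).continuousWithinAt
  have hφ'ab : IntervalIntegrable φ' volume a b := hφ'int a b ha hb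
  have hftc' : ∀ s ∈ Icc a b, φ s - φ a = ∫ t in a..s, φ' t := fun s hs =>
    hftc a s ha (hsub ⟨hs.1, hs.2⟩)
  have ibp := ibp_aux a b ha.1 hab φ φ' v v' hv hv'c hφ'ab hftc'
  -- continuity of φ on [a,b]
  have hφc : ContinuousOn φ (Icc a b) := by
    have hcc : ContinuousOn (fun s => ∫ t in a..s, φ' t) (Icc a b) := by
      have := continuousOn_primitive_interval' hφ'ab (left_mem_uIcc (a := a) (b := b))
      rwa [uIcc_of_le hab] at this
    have : ContinuousOn (fun s => φ a + ∫ t in a..s, φ' t) (Icc a b) :=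
      continuousOn_const.add hcc
    exact this.congr fun s hs => by
      have := hftc' s hs; linarith
  have hvc : ContinuousOn v (Icc a b) := fun s hs => (hv s hs).continuousAt.continuousWithinAt
  -- integrability pieces
  have hIsum : IntervalIntegrable (fun s => φ' s * v s + φ s * v' s) volume a b := by
    have h1 : IntervalIntegrable (fun s => φ' s * v s) volume a b :=
      hφ'ab.mul_continuousOn (by rwa [uIcc_of_le hab])
    have h2 : IntervalIntegrable (fun s => φ s * v' s) volume a b := by
      apply ContinuousOn.intervalIntegrable
      rw [uIcc_of_le hab]
      exact hφc.mul hv'c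
    exact h1.add h2
  have hgc : ContinuousOn (fun s => ψ s / s ^ (1 + 1/γ : ℝ)) (Icc a b) := by
    apply (hψcont.mono hsub).div
    · intro s hs
      exact (Real.continuousAt_rpow_const s _ (Or.inl (ne_of_gt (hpos s hs)))).continuousWithinAt
    · intro s hs
      exact ne_of_gt (Real.rpow_pos_of_pos (hpos s hs) _)
  have hIg : IntervalIntegrable (fun s => (-(1/γ)) * (ψ s / s ^ (1 + 1/γ : ℝ))) volume a b := by
    apply ContinuousOn.intervalIntegrable
    rw [uIcc_of_le hab]
    exact continuousOn_const.mul hgc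
  -- the a.e. inequality on Icc a b
  have hae : ∀ᵐ s ∂(volume.restrict (Icc a b)),
      (-(1/γ)) * (ψ s / s ^ (1 + 1/γ : ℝ)) ≤ φ' s * v s + φ s * v' s := by
    have h1 : ∀ᵐ s ∂(volume.restrict (Icc a b)), φ s ≤ γ * s * φ' s + ψ s :=
      ae_restrict_of_ae_restrict_of_subset hsub hineq
    have h2 : ∀ᵐ s ∂(volume.restrict (Icc a b)), s ∈ Icc a b :=
      ae_restrict_mem measurableSet_Icc
    filter_upwards [h1, h2] with s hineqs hmem
    have hs0 : (0:ℝ) < s := hpos s hmem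
    set A : ℝ := s ^ (-(1/γ) : ℝ) with hA
    set B : ℝ := s ^ ((-(1/γ)) - 1 : ℝ) with hB
    have hB0 : 0 < B := Real.rpow_pos_of_pos hs0 _
    have hAB : s * B = A := by
      rw [hA, hB, ← Real.rpow_one_add' (le_of_lt hs0)]
      · ring_nf
      · intro hcon
        have : (1/γ : ℝ) > 0 := by positivity
        linarith
    have hdiv : ψ s / s ^ (1 + 1/γ : ℝ) = ψ s * B := by
      rw [div_eq_mul_inv, ← Real.rpow_neg (le_of_lt hs0)]
      congr 2
      ring
    have h2' : φ s * B ≤ γ * φ' s * A + ψ s * B := by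
      have := mul_le_mul_of_nonneg_right hineqs (le_of_lt hB0)
      calc φ s * B ≤ (γ * s * φ' s + ψ s) * B := this
        _ = γ * φ' s * (s * B) + ψ s * B := by ring
        _ = γ * φ' s * A + ψ s * B := by rw [hAB]
    have hγinv : (0:ℝ) < 1/γ := by positivity
    have h4 := mul_le_mul_of_nonneg_left h2' (le_of_lt hγinv)
    have h5 : (1/γ) * (γ * φ' s * A + ψ s * B) = φ' s * A + (1/γ) * (ψ s * B) := by
      field_simp
    rw [h5] at h4
    have hveq : v s = A := rfl
    have hv'eq : v' s = (-(1/γ)) * B := rfl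
    rw [hdiv, hveq, hv'eq]
    linarith
  have hmono : ∫ s in a..b, (-(1/γ)) * (ψ s / s ^ (1 + 1/γ : ℝ))
      ≤ ∫ s in a..b, (φ' s * v s + φ s * v' s) :=
    intervalIntegral.integral_mono_ae_restrict hab hIg hIsum hae
  have hineqI : -(1/γ) * ∫ s in Ioc a b, ψ s / s ^ (1 + 1/γ : ℝ)
      ≤ φ b * v b - φ a * v a := by
    rw [ibp]
    calc -(1/γ) * ∫ s in Ioc a b, ψ s / s ^ (1 + 1/γ : ℝ)
        = ∫ s in Ioc a b, (-(1/γ)) * (ψ s / s ^ (1 + 1/γ : ℝ)) := by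
          rw [MeasureTheory.integral_const_mul]
      _ = ∫ s in a..b, (-(1/γ)) * (ψ s / s ^ (1 + 1/γ : ℝ)) := by
          rw [intervalIntegral.integral_of_le hab]
      _ ≤ ∫ s in a..b, (φ' s * v s + φ s * v' s) := hmono
  -- splitting the singular integral
  have hsplit : ∫ s in Ioo 0 b, ψ s / s ^ (1 + 1/γ : ℝ)
      = (∫ s in Ioo 0 a, ψ s / s ^ (1 + 1/γ : ℝ))
        + ∫ s in Ico a b, ψ s / s ^ (1 + 1/γ : ℝ) := by
    rw [← Set.Ioo_union_Ico_eq_Ioo ha.1 hab]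
    apply setIntegral_union
    · rw [Set.disjoint_left]
      intro x hx hx'
      exact absurd hx'.1 (not_le.2 hx.2)
    · exact measurableSet_Ico
    · exact hint.mono_set (Ioo_subset_Ioo le_rfl (le_of_lt ha.2))
    · exact hint.mono_set fun x hx => ⟨lt_of_lt_of_le ha.1 hx.1, lt_of_lt_of_le hx.2 (le_of_lt hb.2)⟩
  have hIcoIoc : ∫ s in Ico a b, ψ s / s ^ (1 + 1/γ : ℝ)
      = ∫ s in Ioc a b, ψ s / s ^ (1 + 1/γ : ℝ) := by
    rw [integral_Ico_eq_integral_Ioo, ← integral_Ioc_eq_integral_Ioo]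
  have hva : φ a / a ^ (1/γ : ℝ) = φ a * v a := by
    rw [hvdef]
    dsimp only
    rw [Real.rpow_neg (le_of_lt ha.1), div_eq_mul_inv]
  have hvb : φ b / b ^ (1/γ : ℝ) = φ b * v b := by
    rw [hvdef]
    dsimp only
    rw [Real.rpow_neg (le_of_lt (lt_of_lt_of_le ha.1 hab)), div_eq_mul_inv]
  rw [hva, hvb, hsplit, hIcoIoc]
  have hγinv : (0:ℝ) < 1/γ := by positivity
  nlinarith [hineqI, hγinv]
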